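/- (Spatial+ with intercept-only residuals recovers the spatial model bias.) Let $r_x = x - \alpha\mathbf{1}$ where $\alpha = \frac{\langle x,\mathbf{1}\rangle_{\hat{\Sigma}^{-1}}}{\|\mathbf{1}\|_{\hat{\Sigma}^{-1}}^2}$. Then in the Spatial+ bias decomposition: (i) $A_2^*(r_x, x) = 0$, i.e., the $\beta_x$-contribution to the bias vanishes; and (ii) the total bias $E(\hat{\beta}_x^{S+}) - \beta_x$ equals $\beta_z\frac{\|\mathbf{1}\|_{\hat{\Sigma}^{-1}}^2\langle x,z\rangle_{\hat{\Sigma}^{-1}} - \langle x,\mathbf{1}\rangle_{\hat{\Sigma}^{-1}}\langle z,\mathbf{1}\rangle_{\hat{\Sigma}^{-1}}}{\|\mathbf{1}\|_{\hat{\Sigma}^{-1}}^2\|x\|_{\hat{\Sigma}^{-1}}^2 - \langle x,\mathbf{1}\rangle_{\hat{\Sigma}^{-1}}^2}$, which is exactly the bias of the ordinary spatial (GLS) model with covariate $x$. -/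

import Mathlib

open Matrix MeasureTheory

/-- Spatial+ with intercept-only residuals recovers the spatial model bias:
with `rₓ = x - α•1`, `α = ⟨x,1⟩/‖1‖²` (the Σ̂⁻¹-orthogonal projection
residual), (i) the `βₓ`-contribution `A₂*` vanishes, and (ii) the total bias
equals the bias of the ordinary spatial (GLS) model with covariate `x`. -/
theorem stmt_9 {n : ℕ} (hn : 0 < n) (x z : Fin n → ℝ) (β0 βx βz : ℝ)
    (ones : Fin n → ℝ) (hones : ones = fun _ => (1 : ℝ))
    (M : Matrix (Fin n) (Fin n) ℝ)
    (hSymm : Mᵀ = M)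
    (hPD : ∀ v : Fin n → ℝ, v ≠ 0 → 0 < v ⬝ᵥ (M *ᵥ v))
    (hx : ∀ c : ℝ, x ≠ c • ones)
    (α : ℝ) (hα : α = (x ⬝ᵥ (M *ᵥ ones)) / (ones ⬝ᵥ (M *ᵥ ones)))
    (rx : Fin n → ℝ) (hrx : rx = x - α • ones)
    {Ω : Type*} [MeasurableSpace Ω] (μ : Measure Ω) [IsProbabilityMeasure μ]
    (ε : Ω → Fin n → ℝ)
    (hεint : ∀ i, Integrable (fun ω => ε ω i) μ)
    (hεmean : ∀ i, (∫ ω, ε ω i ∂μ) = 0)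
    (y : Ω → Fin n → ℝ)
    (hy : ∀ ω i, y ω i = β0 + βx * x i + βz * z i + ε ω i)
    (Xs : Matrix (Fin n) (Fin 2) ℝ)
    (hXs : Xs = Matrix.of fun i j => ![(1 : ℝ), rx i] j)
    (βhat : Ω → Fin 2 → ℝ)
    (hβhat : ∀ ω, βhat ω = ((Xsᵀ * M * Xs)⁻¹ * Xsᵀ * M) *ᵥ y ω)
    (A : ℝ)
    (hA : A = βx * (((ones ⬝ᵥ (M *ᵥ ones)) * (rx ⬝ᵥ (M *ᵥ x)) -
            (rx ⬝ᵥ (M *ᵥ ones)) * (x ⬝ᵥ (M *ᵥ ones))) /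
        ((ones ⬝ᵥ (M *ᵥ ones)) * (rx ⬝ᵥ (M *ᵥ rx)) - (rx ⬝ᵥ (M *ᵥ ones)) ^ 2) - 1)) :
    A = 0 ∧
    (∫ ω, βhat ω 1 ∂μ) - βx =
      βz * ((ones ⬝ᵥ (M *ᵥ ones)) * (x ⬝ᵥ (M *ᵥ z)) -
              (x ⬝ᵥ (M *ᵥ ones)) * (z ⬝ᵥ (M *ᵥ ones))) /
        ((ones ⬝ᵥ (M *ᵥ ones)) * (x ⬝ᵥ (M *ᵥ x)) - (x ⬝ᵥ (M *ᵥ ones)) ^ 2) := by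
  have hones_ne : ones ≠ 0 := by
    rw [hones]
    intro h
    have := congrFun h ⟨0, hn⟩
    simp at this
  have hS11pos : 0 < ones ⬝ᵥ (M *ᵥ ones) := hPD ones hones_ne
  have hS11ne : ones ⬝ᵥ (M *ᵥ ones) ≠ 0 := ne_of_gt hS11pos
  have hrx_ne : rx ≠ 0 := by
    intro h
    apply hx α
    rw [hrx] at h
    exact sub_eq_zero.mp h
  have hg22pos : 0 < rx ⬝ᵥ (M *ᵥ rx) := hPD rx hrx_ne
  have hg22ne : rx ⬝ᵥ (M *ᵥ rx) ≠ 0 := ne_of_gt hg22pos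
  have hsym : ∀ a b : Fin n → ℝ, a ⬝ᵥ (M *ᵥ b) = b ⬝ᵥ (M *ᵥ a) := by
    intro a b
    have h2 : a ᵥ* M = M *ᵥ a := by
      nth_rewrite 1 [← hSymm]
      exact Matrix.vecMul_transpose M a
    rw [Matrix.dotProduct_mulVec, h2, dotProduct_comm]
  have hexp : ∀ w : Fin n → ℝ, rx ⬝ᵥ w = x ⬝ᵥ w - α * (ones ⬝ᵥ w) := by
    intro w
    rw [hrx, sub_dotProduct, smul_dotProduct, smul_eq_mul]
  have hαS : α * (ones ⬝ᵥ (M *ᵥ ones)) = x ⬝ᵥ (M *ᵥ ones) := by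
    rw [hα]; field_simp
  have horth : rx ⬝ᵥ (M *ᵥ ones) = 0 := by
    rw [hexp, hαS]; ring
  have h1z : ones ⬝ᵥ (M *ᵥ z) = z ⬝ᵥ (M *ᵥ ones) := hsym _ _
  have h1x : ones ⬝ᵥ (M *ᵥ x) = x ⬝ᵥ (M *ᵥ ones) := hsym _ _
  have hrMx : rx ⬝ᵥ (M *ᵥ x) = x ⬝ᵥ (M *ᵥ x) - α * (x ⬝ᵥ (M *ᵥ ones)) := by
    rw [hexp, h1x]
  have hrMz : rx ⬝ᵥ (M *ᵥ z) = x ⬝ᵥ (M *ᵥ z) - α * (z ⬝ᵥ (M *ᵥ ones)) := by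
    rw [hexp, h1z]
  have hg22 : rx ⬝ᵥ (M *ᵥ rx) = rx ⬝ᵥ (M *ᵥ x) := by
    rw [hexp (M *ᵥ rx), hsym x rx, hsym ones rx, horth]
    ring
  have hApart : A = 0 := by
    have hne : (ones ⬝ᵥ (M *ᵥ ones)) * (rx ⬝ᵥ (M *ᵥ rx)) ≠ 0 := mul_ne_zero hS11ne hg22ne
    rw [hA, horth, ← hg22]
    simp only [zero_mul, mul_zero, sub_zero, ne_eq, OfNat.ofNat_ne_zero,
      not_false_eq_true, zero_pow]
    rw [div_self hne]
    ring
  -- columns of Xs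
  have hXs0 : ∀ i, Xs i 0 = ones i := by intro i; rw [hXs, hones]; rfl
  have hXs1 : ∀ i, Xs i 1 = rx i := by intro i; rw [hXs]; rfl
  -- Gram matrix
  have hcol : ∀ (a b : Fin 2) (u v : Fin n → ℝ), (∀ i, Xs i a = u i) → (∀ i, Xs i b = v i) →
      (Xsᵀ * M * Xs) a b = u ⬝ᵥ (M *ᵥ v) := by
    intro a b u v hu hv
    simp only [Matrix.mul_apply, Matrix.transpose_apply, Matrix.mulVec, dotProduct,
      Finset.sum_mul, Finset.mul_sum, hu, hv]
    rw [Finset.sum_comm]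
    exact Finset.sum_congr rfl fun i _ => Finset.sum_congr rfl fun j _ => by ring
  have hGeq : Xsᵀ * M * Xs =
      !![ones ⬝ᵥ (M *ᵥ ones), 0; 0, rx ⬝ᵥ (M *ᵥ rx)] := by
    ext a b
    fin_cases a <;> fin_cases b
    · exact (hcol 0 0 ones ones hXs0 hXs0).trans (by simp)
    · exact (hcol 0 1 ones rx hXs0 hXs1).trans (by rw [hsym ones rx, horth]; simp)
    · exact (hcol 1 0 rx ones hXs1 hXs0).trans (by rw [horth]; simp)
    · exact (hcol 1 1 rx rx hXs1 hXs1).trans (by simp)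
  have hinv : (Xsᵀ * M * Xs)⁻¹ =
      !![(ones ⬝ᵥ (M *ᵥ ones))⁻¹, 0; 0, (rx ⬝ᵥ (M *ᵥ rx))⁻¹] := by
    apply Matrix.inv_eq_right_inv
    rw [hGeq]
    ext a b
    fin_cases a <;> fin_cases b <;>
      simp [Matrix.mul_apply, Fin.sum_univ_two, Matrix.one_apply, hS11ne, hg22ne]
  -- formula for βhat ω 1
  have hform : ∀ ω, βhat ω 1 = (rx ⬝ᵥ (M *ᵥ rx))⁻¹ * (rx ⬝ᵥ (M *ᵥ y ω)) := by
    intro ω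
    rw [hβhat ω, hinv, Matrix.mul_assoc, ← Matrix.mulVec_mulVec, ← Matrix.mulVec_mulVec]
    simp only [Matrix.mulVec, dotProduct, Fin.sum_univ_two, Matrix.transpose_apply,
      hXs1, Matrix.cons_val', Matrix.cons_val_zero, Matrix.cons_val_one, Matrix.head_cons,
      Matrix.empty_val', Matrix.cons_val_fin_one, Matrix.head_fin_const, Matrix.of_apply]
    rw [Finset.mul_sum]
    ring_nf
    simp [Finset.mul_sum]
  -- integrability and means of y
  have hyint : ∀ j, Integrable (fun ω => y ω j) μ := by
    intro j
    have h : (fun ω => y ω j) = fun ω => (β0 + βx * x j + βz * z j) + ε ω j :=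
      funext fun ω => hy ω j
    rw [h]; exact (integrable_const _).add (hεint j)
  have hymean : ∀ j, (∫ ω, y ω j ∂μ) = β0 + βx * x j + βz * z j := by
    intro j
    have h : (fun ω => y ω j) = fun ω => (β0 + βx * x j + βz * z j) + ε ω j :=
      funext fun ω => hy ω j
    rw [h, integral_add (integrable_const _) (hεint j), integral_const, hεmean,
      probReal_univ]
    simp
  have key : (∫ ω, βhat ω 1 ∂μ) =
      (rx ⬝ᵥ (M *ᵥ rx))⁻¹ * (∑ j, (rx ᵥ* M) j * (β0 + βx * x j + βz * z j)) := by
    have h1 : ∀ ω, βhat ω 1 = (rx ⬝ᵥ (M *ᵥ rx))⁻¹ * (∑ j, (rx ᵥ* M) j * y ω j) := by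
      intro ω
      rw [hform ω]
      congr 1
      rw [Matrix.dotProduct_mulVec]
      rfl
    calc (∫ ω, βhat ω 1 ∂μ)
        = ∫ ω, (rx ⬝ᵥ (M *ᵥ rx))⁻¹ * (∑ j, (rx ᵥ* M) j * y ω j) ∂μ := by
          simp_rw [h1]
      _ = (rx ⬝ᵥ (M *ᵥ rx))⁻¹ * ∫ ω, (∑ j, (rx ᵥ* M) j * y ω j) ∂μ :=
          integral_const_mul _ _
      _ = (rx ⬝ᵥ (M *ᵥ rx))⁻¹ * ∑ j, ∫ ω, (rx ᵥ* M) j * y ω j ∂μ := by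
          rw [integral_finset_sum _ (fun j _ => (hyint j).const_mul _)]
      _ = _ := by
          congr 1
          exact Finset.sum_congr rfl fun j _ => by
            rw [integral_const_mul, hymean j]
  have hm : (fun j => β0 + βx * x j + βz * z j) = β0 • ones + βx • x + βz • z := by
    funext j
    simp [hones, Pi.add_apply, Pi.smul_apply, smul_eq_mul]
  have hsum : (∑ j, (rx ᵥ* M) j * (β0 + βx * x j + βz * z j)) =
      β0 * (rx ⬝ᵥ (M *ᵥ ones)) + βx * (rx ⬝ᵥ (M *ᵥ x)) + βz * (rx ⬝ᵥ (M *ᵥ z)) := by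
    have h0 : (∑ j, (rx ᵥ* M) j * (β0 + βx * x j + βz * z j)) =
        (rx ᵥ* M) ⬝ᵥ (fun j => β0 + βx * x j + βz * z j) := rfl
    rw [h0, hm, ← Matrix.dotProduct_mulVec, Matrix.mulVec_add, Matrix.mulVec_add,
      Matrix.mulVec_smul, Matrix.mulVec_smul, Matrix.mulVec_smul,
      dotProduct_add, dotProduct_add, dotProduct_smul,
      dotProduct_smul, dotProduct_smul, smul_eq_mul, smul_eq_mul,
      smul_eq_mul]
  have hInt : (∫ ω, βhat ω 1 ∂μ) = βx + (rx ⬝ᵥ (M *ᵥ rx))⁻¹ * (βz * (rx ⬝ᵥ (M *ᵥ z))) := by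
    rw [key, hsum, horth, ← hg22]
    field_simp
    ring
  refine ⟨hApart, ?_⟩
  have hnum : (ones ⬝ᵥ (M *ᵥ ones)) * (x ⬝ᵥ (M *ᵥ z)) -
      (x ⬝ᵥ (M *ᵥ ones)) * (z ⬝ᵥ (M *ᵥ ones)) =
      (ones ⬝ᵥ (M *ᵥ ones)) * (rx ⬝ᵥ (M *ᵥ z)) := by
    rw [hrMz]
    linear_combination (z ⬝ᵥ (M *ᵥ ones)) * hαS
  have hden : (ones ⬝ᵥ (M *ᵥ ones)) * (x ⬝ᵥ (M *ᵥ x)) - (x ⬝ᵥ (M *ᵥ ones)) ^ 2 =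
      (ones ⬝ᵥ (M *ᵥ ones)) * (rx ⬝ᵥ (M *ᵥ rx)) := by
    rw [hg22, hrMx]
    linear_combination (x ⬝ᵥ (M *ᵥ ones)) * hαS
  rw [hInt, hnum, hden]
  field_simp
  ring
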